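/- Let T : L^n → M be a symmetric lattice n-homomorphism between distributive lattices, n ≥ 2, with diagonal P_T(x) := T(x,...,x). Then P_T is a lattice homomorphism if and only if ⋀_{i=1}^n P_T(x_i) ≤ T(x_1,...,x_n) ≤ ⋁_{i=1}^n P_T(x_i) holds for all x_1,...,x_n ∈ L. -/

import Mathlib

def median {L : Type*} [DistribLattice L] {n : ℕ} (k : ℕ) (hk1 : 1 ≤ k) (hkn : k ≤ n)
    (x : Fin n → L) : L :=
  ((Finset.univ.powersetCard (n + 1 - k)).attach).sup'
    (Finset.attach_nonempty_iff.mpr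
      (Finset.powersetCard_nonempty.mpr (by simp [Finset.card_univ]; omega)))
    fun s => s.1.inf'
      (Finset.card_pos.mp (by
        have h := (Finset.mem_powersetCard.mp s.2).2
        omega)) x

def medianInf {L : Type*} [DistribLattice L] {n : ℕ} (k : ℕ) (hk1 : 1 ≤ k) (hkn : k ≤ n)
    (x : Fin n → L) : L :=
  ((Finset.univ.powersetCard (n + 1 - k)).attach).inf'
    (Finset.attach_nonempty_iff.mpr
      (Finset.powersetCard_nonempty.mpr (by simp [Finset.card_univ]; omega)))
    fun s => s.1.sup'
      (Finset.card_pos.mp (by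
        have h := (Finset.mem_powersetCard.mp s.2).2
        omega)) x
def TotalOrderizationInvariant {L : Type*} [DistribLattice L] {A : Type*} {n : ℕ}
    (T : (Fin n → L) → A) : Prop :=
  ∀ x : Fin n → L,
    T x = T fun k => median (k.1 + 1) (Nat.succ_le_succ (Nat.zero_le _)) k.2 x

/-- `T` is symmetric: invariant under every permutation of its arguments. -/
def IsSymmetricMap {L A : Type*} {n : ℕ} (T : (Fin n → L) → A) : Prop :=
  ∀ (σ : Equiv.Perm (Fin n)) (x : Fin n → L), T (x ∘ σ) = T x
/-- `T : Lⁿ → M` is a lattice n-homomorphism: in each coordinate separately it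
preserves binary joins and binary meets. -/
def IsLatticeMultiHom {L M : Type*} [DistribLattice L] [DistribLattice M] {n : ℕ}
    (T : (Fin n → L) → M) : Prop :=
  ∀ (x : Fin n → L) (i : Fin n) (y : L),
    T (Function.update x i (x i ⊔ y)) = T x ⊔ T (Function.update x i y) ∧
    T (Function.update x i (x i ⊓ y)) = T x ⊓ T (Function.update x i y)

/-- `P : L → M` is a lattice homomorphism. -/
def IsLatticeHomMap {L M : Type*} [DistribLattice L] [DistribLattice M] (P : L → M) : Prop :=
  ∀ a b : L, P (a ⊔ b) = P a ⊔ P b ∧ P (a ⊓ b) = P a ⊓ P b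


section Aux
variable {L M : Type*} [DistribLattice L] [DistribLattice M] {n : ℕ}
variable {T : (Fin n → L) → M}

lemma coordJoin (hT : IsLatticeMultiHom T) (x : Fin n → L) (i : Fin n) (u v : L) :
    T (Function.update x i (u ⊔ v)) = T (Function.update x i u) ⊔ T (Function.update x i v) := by
  have h := (hT (Function.update x i u) i v).1
  simpa using h

lemma coordMeet (hT : IsLatticeMultiHom T) (x : Fin n → L) (i : Fin n) (u v : L) :
    T (Function.update x i (u ⊓ v)) = T (Function.update x i u) ⊓ T (Function.update x i v) := by
  have h := (hT (Function.update x i u) i v).2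
  simpa using h

lemma Tmono (hT : IsLatticeMultiHom T) {x y : Fin n → L} (hxy : ∀ i, x i ≤ y i) :
    T x ≤ T y := by
  have key : ∀ s : Finset (Fin n), T x ≤ T (fun i => if i ∈ s then y i else x i) := by
    intro s
    induction s using Finset.induction with
    | empty => simp
    | @insert j s hj ih =>
      set v : Fin n → L := fun i => if i ∈ s then y i else x i with hv
      have heq : (fun i => if i ∈ insert j s then y i else x i) = Function.update v j (y j) := by
        funext i
        by_cases hij : i = j
        · subst hij; simp [Function.update_self]
        · simp [Function.update_of_ne hij, hv, hij]
      rw [heq]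
      have hvj : v j = x j := by simp [hv, hj]
      have h1 := (hT v j (y j)).1
      have : v j ⊔ y j = y j := by rw [hvj]; exact sup_eq_right.mpr (hxy j)
      rw [this] at h1
      calc T x ≤ T v := ih
        _ ≤ T v ⊔ T (Function.update v j (y j)) := le_sup_left
        _ = T (Function.update v j (y j)) := h1.symm
  have := key Finset.univ
  simpa using this
lemma splitJoin (hT : IsLatticeMultiHom T) (a b : L) (hne : Nonempty (Fin n))
    (hbd : ∀ x : Fin n → L, T x ≤ Finset.univ.sup' Finset.univ_nonempty (fun i => T fun _ => x i))
    (s : Finset (Fin n)) :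
    ∀ x : Fin n → L, (∀ i ∈ s, x i = a ⊔ b) → (∀ i ∉ s, x i = a ∨ x i = b) →
      T x ≤ T (fun _ => a) ⊔ T (fun _ => b) := by
  induction s using Finset.induction with
  | empty =>
    intro x _ ht
    refine (hbd x).trans (Finset.sup'_le _ _ fun i _ => ?_)
    rcases ht i (by simp) with h | h <;> rw [h]
    · exact le_sup_left
    · exact le_sup_right
  | @insert j s hj ih =>
    intro x hs ht
    have hx : x = Function.update x j (a ⊔ b) := by
      funext i
      by_cases hij : i = j
      · rw [hij, Function.update_self]; exact hs j (Finset.mem_insert_self j s)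
      · simp [Function.update_of_ne hij]
    have hsplit : T x = T (Function.update x j a) ⊔ T (Function.update x j b) := by
      conv_lhs => rw [hx]
      exact coordJoin hT x j a b
    rw [hsplit]
    have key : ∀ c : L, c = a ∨ c = b → T (Function.update x j c) ≤ T (fun _ => a) ⊔ T (fun _ => b) := by
      intro c hc
      refine ih (Function.update x j c) (fun i hi => ?_) (fun i hi => ?_)
      · have hij : i ≠ j := fun h => hj (h ▸ hi)
        rw [Function.update_of_ne hij]
        exact hs i (Finset.mem_insert_of_mem hi)
      · by_cases hij : i = j
        · rw [hij, Function.update_self]; exact hc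
        · rw [Function.update_of_ne hij]
          exact ht i (by simp [hij, hi])
    exact sup_le (key a (Or.inl rfl)) (key b (Or.inr rfl))

lemma splitMeet (hT : IsLatticeMultiHom T) (a b : L) (hne : Nonempty (Fin n))
    (hbd : ∀ x : Fin n → L, Finset.univ.inf' Finset.univ_nonempty (fun i => T fun _ => x i) ≤ T x)
    (s : Finset (Fin n)) :
    ∀ x : Fin n → L, (∀ i ∈ s, x i = a ⊓ b) → (∀ i ∉ s, x i = a ∨ x i = b) →
      T (fun _ => a) ⊓ T (fun _ => b) ≤ T x := by
  induction s using Finset.induction with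
  | empty =>
    intro x _ ht
    refine le_trans (Finset.le_inf' _ _ fun i _ => ?_) (hbd x)
    rcases ht i (by simp) with h | h <;> rw [h]
    · exact inf_le_left
    · exact inf_le_right
  | @insert j s hj ih =>
    intro x hs ht
    have hx : x = Function.update x j (a ⊓ b) := by
      funext i
      by_cases hij : i = j
      · rw [hij, Function.update_self]; exact hs j (Finset.mem_insert_self j s)
      · simp [Function.update_of_ne hij]
    have hsplit : T x = T (Function.update x j a) ⊓ T (Function.update x j b) := by
      conv_lhs => rw [hx]
      exact coordMeet hT x j a b
    rw [hsplit]
    have key : ∀ c : L, c = a ∨ c = b → T (fun _ => a) ⊓ T (fun _ => b) ≤ T (Function.update x j c) := by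
      intro c hc
      refine ih (Function.update x j c) (fun i hi => ?_) (fun i hi => ?_)
      · have hij : i ≠ j := fun h => hj (h ▸ hi)
        rw [Function.update_of_ne hij]
        exact hs i (Finset.mem_insert_of_mem hi)
      · by_cases hij : i = j
        · rw [hij, Function.update_self]; exact hc
        · rw [Function.update_of_ne hij]
          exact ht i (by simp [hij, hi])
    exact le_inf (key a (Or.inl rfl)) (key b (Or.inr rfl))
end Aux

/-- The diagonal of a symmetric lattice n-homomorphism is a lattice homomorphism iff
⋀ᵢ P_T(xᵢ) ≤ T(x₁,...,xₙ) ≤ ⋁ᵢ P_T(xᵢ) holds for all arguments. -/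
theorem diagonal_latticeHom_iff {L M : Type*} [DistribLattice L] [DistribLattice M]
    {n : ℕ} (hn : 2 ≤ n) (T : (Fin n → L) → M) (hT : IsLatticeMultiHom T)
    (hsymm : IsSymmetricMap T) :
    IsLatticeHomMap (fun x : L => T fun _ => x) ↔
      ∀ x : Fin n → L,
        (Finset.univ.inf'
            (by have : Nonempty (Fin n) := ⟨⟨0, by omega⟩⟩; exact Finset.univ_nonempty)
            (fun i => T fun _ => x i)) ≤ T x ∧
        T x ≤ Finset.univ.sup'
            (by have : Nonempty (Fin n) := ⟨⟨0, by omega⟩⟩; exact Finset.univ_nonempty)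
            (fun i => T fun _ => x i) := by
  have hne : Nonempty (Fin n) := ⟨⟨0, by omega⟩⟩
  constructor
  · intro hP x
    constructor
    · -- lower bound: x i ≥ inf, T x ≥ T (const inf) = P (inf x) = inf P (x i)
      have h1 : T (fun _ => Finset.univ.inf' Finset.univ_nonempty x) ≤ T x :=
        Tmono hT fun i => Finset.inf'_le _ (Finset.mem_univ i)
      refine le_trans (le_of_eq ?_) h1
      exact (Finset.apply_inf'_eq_inf'_comp _ (fun c => T fun _ => c)
        (fun u v => (hP u v).2)).symm
    · have h1 : T x ≤ T (fun _ => Finset.univ.sup' Finset.univ_nonempty x) :=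
        Tmono hT fun i => Finset.le_sup' _ (Finset.mem_univ i)
      refine h1.trans (le_of_eq ?_)
      exact Finset.comp_sup'_eq_sup'_comp _ (fun c => T fun _ => c)
        (fun u v => (hP u v).1)
  · intro hbd a b
    constructor
    · apply le_antisymm
      · exact splitJoin hT a b hne (fun x => (hbd x).2) Finset.univ (fun _ => a ⊔ b)
          (fun i _ => rfl) (fun i hi => absurd (Finset.mem_univ i) hi)
      · exact sup_le (Tmono hT fun _ => le_sup_left) (Tmono hT fun _ => le_sup_right)
    · apply le_antisymm
      · exact le_inf (Tmono hT fun _ => inf_le_left) (Tmono hT fun _ => inf_le_right)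
      · exact splitMeet hT a b hne (fun x => (hbd x).1) Finset.univ (fun _ => a ⊓ b)
          (fun i _ => rfl) (fun i hi => absurd (Finset.mem_univ i) hi)
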